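/- If a normed space is 2-uniformly convex with constant t > 0 (i.e. ‖(f+g)/2‖² + t‖(f-g)/2‖² ≤ (‖f‖² + ‖g‖²)/2 for all f, g), then it has cotype 2 with constant √t: for all m ≥ 1 and vectors f₁,…,f_m, t·∑‖fᵢ‖² ≤ E_ε‖∑εᵢfᵢ‖², where ε₁,…,ε_m are i.i.d. Rademacher random variables. -/

import Mathlib

/-- 2-uniform convexity with constant `t > 0` implies cotype 2 with
constant `√t`: for all `m ≥ 1` and `f₁,…,f_m`,
`t·∑‖fᵢ‖² ≤ E_ε ‖∑ εᵢ fᵢ‖²` where the `εᵢ` are i.i.d. Rademacher signs. -/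
theorem uc2_implies_cotype2 {E : Type*} [NormedAddCommGroup E] [NormedSpace ℝ E]
    (t : ℝ) (ht : 0 < t)
    (hUC : ∀ f g : E,
      ‖(2⁻¹ : ℝ) • (f + g)‖ ^ 2 + t * ‖(2⁻¹ : ℝ) • (f - g)‖ ^ 2
        ≤ (‖f‖ ^ 2 + ‖g‖ ^ 2) / 2) :
    ∀ m : ℕ, 1 ≤ m → ∀ f : Fin m → E,
      t * ∑ i, ‖f i‖ ^ 2
        ≤ (1 / 2 ^ m) *
            ∑ ε : Fin m → Bool, ‖∑ i, (if ε i then (1 : ℝ) else -1) • f i‖ ^ 2 := by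
  have key : ∀ S g : E, ‖S‖ ^ 2 + t * ‖g‖ ^ 2 ≤ (‖g + S‖ ^ 2 + ‖-g + S‖ ^ 2) / 2 := by
    intro S g
    have h := hUC (g + S) (-g + S)
    have h1 : (2⁻¹ : ℝ) • ((g + S) + (-g + S)) = S := by module
    have h2 : (2⁻¹ : ℝ) • ((g + S) - (-g + S)) = g := by module
    rw [h1, h2] at h
    linarith
  have main : ∀ m : ℕ, ∀ f : Fin m → E,
      t * ∑ i, ‖f i‖ ^ 2
        ≤ (1 / 2 ^ m) *
            ∑ ε : Fin m → Bool, ‖∑ i, (if ε i then (1 : ℝ) else -1) • f i‖ ^ 2 := by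
    intro m
    induction m with
    | zero => intro f; simp
    | succ m ih =>
      intro f
      have hsum : ∑ ε : Fin (m + 1) → Bool, ‖∑ i, (if ε i then (1 : ℝ) else -1) • f i‖ ^ 2
          = ∑ p : Bool × (Fin m → Bool),
              ‖∑ i, (if (Fin.cons p.1 p.2 : Fin (m + 1) → Bool) i then (1 : ℝ) else -1)
                • f i‖ ^ 2 :=
        (Fintype.sum_equiv (Fin.consEquiv fun _ : Fin (m + 1) => Bool) _ _ (fun p => rfl)).symm
      rw [hsum, Fintype.sum_prod_type, Fintype.sum_bool]
      simp only [Fin.sum_univ_succ, Fin.cons_zero, Fin.cons_succ, Bool.false_eq_true,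
        if_true, if_false, one_smul, neg_one_smul]
      set S : (Fin m → Bool) → E := fun ε => ∑ i : Fin m, (if ε i then (1 : ℝ) else -1) • f i.succ
        with hS
      have hpt : ∀ ε : Fin m → Bool,
          2 * ‖S ε‖ ^ 2 + 2 * (t * ‖f 0‖ ^ 2)
            ≤ ‖f 0 + S ε‖ ^ 2 + ‖-f 0 + S ε‖ ^ 2 := by
        intro ε
        have := key (S ε) (f 0)
        linarith
      have hlb : ∑ ε : Fin m → Bool, (2 * ‖S ε‖ ^ 2 + 2 * (t * ‖f 0‖ ^ 2))
          ≤ ∑ ε : Fin m → Bool, ‖f 0 + S ε‖ ^ 2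
            + ∑ ε : Fin m → Bool, ‖-f 0 + S ε‖ ^ 2 := by
        rw [← Finset.sum_add_distrib]
        exact Finset.sum_le_sum fun ε _ => hpt ε
      have hcard : (Finset.univ : Finset (Fin m → Bool)).card = 2 ^ m := by
        simp [Finset.card_univ]
      rw [Finset.sum_add_distrib, Finset.sum_const, hcard] at hlb
      have hih := ih (fun i => f i.succ)
      have hP : (0 : ℝ) < 2 ^ m := by positivity
      rw [← Finset.mul_sum, nsmul_eq_mul] at hlb
      push_cast at hlb
      -- turn goal into linear arithmetic
      have hmain : (1 / 2 ^ (m + 1) : ℝ) *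
          (∑ ε : Fin m → Bool, ‖f 0 + S ε‖ ^ 2 + ∑ ε : Fin m → Bool, ‖-f 0 + S ε‖ ^ 2)
          ≥ (1 / 2 ^ m : ℝ) * ∑ ε : Fin m → Bool, ‖S ε‖ ^ 2 + t * ‖f 0‖ ^ 2 := by
        have heq : (1 / 2 ^ (m + 1) : ℝ) *
            (2 * ∑ ε : Fin m → Bool, ‖S ε‖ ^ 2 + 2 ^ m * (2 * (t * ‖f 0‖ ^ 2)))
            = (1 / 2 ^ m : ℝ) * ∑ ε : Fin m → Bool, ‖S ε‖ ^ 2 + t * ‖f 0‖ ^ 2 := by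
          rw [pow_succ]
          field_simp
        rw [ge_iff_le, ← heq]
        apply mul_le_mul_of_nonneg_left hlb
        positivity
      calc t * (‖f 0‖ ^ 2 + ∑ i : Fin m, ‖f i.succ‖ ^ 2)
          = t * ∑ i : Fin m, ‖f i.succ‖ ^ 2 + t * ‖f 0‖ ^ 2 := by ring
        _ ≤ (1 / 2 ^ m : ℝ) * ∑ ε : Fin m → Bool, ‖S ε‖ ^ 2 + t * ‖f 0‖ ^ 2 := by
            exact add_le_add_left hih _
        _ ≤ _ := hmain
  intro m _ f
  exact main m f
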